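/- For distinct points x, y with x, y < 1 and parameters a, c (c not a non-positive integer, Re c > Re a > 0), the Appell function F₁ satisfies F₁(a;1,1;c;x,y) = (x ₂F₁(a,1;c;x) − y ₂F₁(a,1;c;y)) / (x − y). -/

import Mathlib

open MeasureTheory

/-- The Appell function `F₁(a;1,1;c;x,y)` defined by its Euler integral. -/
noncomputable def appellF1 (a c : ℂ) (x y : ℝ) : ℂ :=
  Complex.Gamma c / (Complex.Gamma a * Complex.Gamma (c - a)) *
    ∫ t in Set.Ioo (0 : ℝ) 1,
      (t : ℂ) ^ (a - 1) * ((1 - t : ℝ) : ℂ) ^ (c - a - 1) *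
        ((1 : ℂ) - x * t)⁻¹ * ((1 : ℂ) - y * t)⁻¹

/-- The Gauss hypergeometric function `₂F₁(a,1;c;z)` defined by its Euler integral. -/
noncomputable def gauss2F1 (a c : ℂ) (z : ℝ) : ℂ :=
  Complex.Gamma c / (Complex.Gamma a * Complex.Gamma (c - a)) *
    ∫ t in Set.Ioo (0 : ℝ) 1,
      (t : ℂ) ^ (a - 1) * ((1 - t : ℝ) : ℂ) ^ (c - a - 1) * ((1 : ℂ) - z * t)⁻¹

lemma aux_pos {z t : ℝ} (hz : z < 1) (ht : t ∈ Set.Ioo (0 : ℝ) 1) : 0 < 1 - z * t := by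
  rcases le_or_gt z 0 with h | h
  · nlinarith [ht.1, ht.2, mul_nonpos_of_nonpos_of_nonneg h ht.1.le]
  · nlinarith [ht.1, ht.2]

lemma aux_ne {z t : ℝ} (hz : z < 1) (ht : t ∈ Set.Ioo (0 : ℝ) 1) :
    (1 : ℂ) - z * t ≠ 0 := by
  have h := (aux_pos hz ht).ne'
  intro h'
  apply h
  have : ((1 - z * t : ℝ) : ℂ) = 0 := by push_cast; linear_combination h'
  exact_mod_cast this

lemma aux_norm {z t : ℝ} (hz : z < 1) (ht : t ∈ Set.Ioo (0 : ℝ) 1) :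
    ‖((1 : ℂ) - z * t)⁻¹‖ ≤ (min (1 - z) 1)⁻¹ := by
  have h1 : ((1 : ℂ) - z * t) = ((1 - z * t : ℝ) : ℂ) := by push_cast; ring
  have hpos := aux_pos hz ht
  have hmin : 0 < min (1 - z) 1 := lt_min (by linarith) one_pos
  rw [h1, norm_inv, Complex.norm_real, Real.norm_eq_abs, abs_of_pos hpos]
  apply inv_anti₀ hmin
  rcases le_or_gt z 0 with h | h
  · have : z * t ≤ 0 := mul_nonpos_of_nonpos_of_nonneg h ht.1.le
    calc min (1 - z) 1 ≤ 1 := min_le_right _ _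
    _ ≤ 1 - z * t := by linarith
  · have : z * t ≤ z := by nlinarith [ht.2]
    calc min (1 - z) 1 ≤ 1 - z := min_le_left _ _
    _ ≤ 1 - z * t := by linarith
 
lemma aux_integrable {z : ℝ} (hz : z < 1) {F : ℝ → ℂ}
    (hF : IntegrableOn F (Set.Ioo (0 : ℝ) 1)) :
    IntegrableOn (fun t : ℝ => F t * ((1 : ℂ) - z * t)⁻¹) (Set.Ioo (0 : ℝ) 1) := by
  have hm : AEStronglyMeasurable (fun t : ℝ => ((1 : ℂ) - z * t)⁻¹)
      (volume.restrict (Set.Ioo (0 : ℝ) 1)) := by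
    apply Measurable.aestronglyMeasurable
    fun_prop
  have hbnd : ∀ᵐ (t : ℝ) ∂(volume.restrict (Set.Ioo (0 : ℝ) 1)),
      ‖((1 : ℂ) - z * t)⁻¹‖ ≤ (min (1 - z) 1)⁻¹ := by
    rw [ae_restrict_iff' measurableSet_Ioo]
    exact Filter.Eventually.of_forall fun t ht => aux_norm hz ht
  have := hF.bdd_mul (f := fun t : ℝ => ((1 : ℂ) - z * t)⁻¹) hm hbnd
  simpa [mul_comm, IntegrableOn] using this

/-- `F₁(a;1,1;c;x,y) = (x ₂F₁(a,1;c;x) − y ₂F₁(a,1;c;y)) / (x − y)` for distinct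
`x, y < 1`. -/
theorem stmt13 (a c : ℂ) (x y : ℝ) (ha : 0 < a.re) (hac : a.re < c.re)
    (hc : ∀ n : ℕ, c ≠ -(n : ℂ)) (hx : x < 1) (hy : y < 1) (hxy : x ≠ y) :
    appellF1 a c x y =
      ((x : ℂ) * gauss2F1 a c x - (y : ℂ) * gauss2F1 a c y) / ((x : ℂ) - y) := by
  have hxyC : (x : ℂ) - y ≠ 0 := by
    intro h
    apply hxy
    have : ((x - y : ℝ) : ℂ) = 0 := by push_cast; linear_combination h
    have := Complex.ofReal_eq_zero.mp this
    linarith [sub_eq_zero.mp this]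
  set F : ℝ → ℂ := fun t => (t : ℂ) ^ (a - 1) * ((1 - t : ℝ) : ℂ) ^ (c - a - 1) with hFdef
  have hF : IntegrableOn F (Set.Ioo (0 : ℝ) 1) := by
    have h := Complex.betaIntegral_convergent (u := a) (v := c - a) ha (by rw [Complex.sub_re]; linarith)
    have h' : IntegrableOn (fun t : ℝ => (t : ℂ) ^ (a - 1) * ((1 : ℂ) - t) ^ (c - a - 1))
        (Set.Ioc (0 : ℝ) 1) := by
      simpa [intervalIntegrable_iff_integrableOn_Ioc_of_le zero_le_one] using h
    have h'' := h'.mono_set Set.Ioo_subset_Ioc_self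
    apply h''.congr_fun _ measurableSet_Ioo
    intro t _
    simp only [hFdef]
    norm_cast
  have hFx := aux_integrable hx hF
  have hFy := aux_integrable hy hF
  have key : (∫ t in Set.Ioo (0 : ℝ) 1,
      (t : ℂ) ^ (a - 1) * ((1 - t : ℝ) : ℂ) ^ (c - a - 1) *
        ((1 : ℂ) - x * t)⁻¹ * ((1 : ℂ) - y * t)⁻¹)
      = ((x : ℂ) / ((x : ℂ) - y)) * (∫ t in Set.Ioo (0 : ℝ) 1, F t * ((1 : ℂ) - x * t)⁻¹)
        - ((y : ℂ) / ((x : ℂ) - y)) * (∫ t in Set.Ioo (0 : ℝ) 1, F t * ((1 : ℂ) - y * t)⁻¹) := by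
    rw [← integral_const_mul, ← integral_const_mul, ← integral_sub]
    · apply setIntegral_congr_fun measurableSet_Ioo
      intro t ht
      have hux := aux_ne hx ht
      have huy := aux_ne hy ht
      simp only [hFdef]
      rw [div_mul_eq_mul_div, div_mul_eq_mul_div, div_sub_div_same, eq_div_iff hxyC]
      linear_combination ((x : ℂ) * ((t : ℂ) ^ (a - 1) * ((1 - t : ℝ) : ℂ) ^ (c - a - 1)) * ((1 : ℂ) - x * t)⁻¹) * (mul_inv_cancel₀ huy) - ((y : ℂ) * ((t : ℂ) ^ (a - 1) * ((1 - t : ℝ) : ℂ) ^ (c - a - 1)) * ((1 : ℂ) - y * t)⁻¹) * (mul_inv_cancel₀ hux)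
    · exact hFx.const_mul _
    · exact hFy.const_mul _
  rw [appellF1, gauss2F1, gauss2F1, key]
  set C := Complex.Gamma c / (Complex.Gamma a * Complex.Gamma (c - a))
  set Ix := ∫ t in Set.Ioo (0 : ℝ) 1, F t * ((1 : ℂ) - x * t)⁻¹
  set Iy := ∫ t in Set.Ioo (0 : ℝ) 1, F t * ((1 : ℂ) - y * t)⁻¹
  field_simp
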